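/- Let G be a 3-regular graph and f: E(G) → {0,1} a function of even parity. Then the CFI graph X_f(G) has edge expansion Ex(X_f(G)) ≥ Ex(G)/54. -/

import Mathlib

open SimpleGraph

variable {V : Type*} [Fintype V] [DecidableEq V]

/-- Vertices of the CFI graph `X_f(G)`: a middle vertex `(v, T)` for each vertex `v`
of `G` and each even subset `T` of the neighbors of `v` (encoding the even-parity
bit-vector `b_u = [u ∈ T]`), and an edge vertex `(v, u, b)` for each directed edge
`(v,u)` of `G` and `b ∈ {0,1}`. -/
def CFIVert (G : SimpleGraph V) [DecidableRel G.Adj] : Type _ :=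
  {x : (V × Finset V) ⊕ (V × V × Bool) //
    Sum.elim (fun p => p.2 ⊆ G.neighborFinset p.1 ∧ Even p.2.card)
      (fun p => G.Adj p.1 p.2.1) x}

/-- The CFI graph `X_f(G)` (as an uncolored graph this is `Y_f(G)`): middle vertex
`v_T` is adjacent to edge vertex `(v,u)_b` iff `b = [u ∈ T]`, and edge vertices
`(v,u)_b` and `(u,v)_{b ⊕ f((u,v))}` are joined for every edge `(u,v)` of `G`. -/
def CFIGraph (G : SimpleGraph V) [DecidableRel G.Adj] (f : Sym2 V → Bool) :
    SimpleGraph (CFIVert G) :=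
  SimpleGraph.fromRel fun a b =>
    match a.1, b.1 with
    | .inl (v, T), .inr (w, u, c) => v = w ∧ c = decide (u ∈ T)
    | .inr (v, u, c), .inr (v', u', c') => v = u' ∧ u = v' ∧ c' = (c ^^ f s(v, u))
    | _, _ => False

/-- The coloring of `X_f(G)`: each middle vertex of the gadget at `v` is colored by
`v`, and the pair of edge vertices `(v,u)_0, (v,u)_1` is colored by `(v,u)`. -/
def CFIColor (G : SimpleGraph V) [DecidableRel G.Adj] : CFIVert G → V ⊕ (V × V) :=
  fun a => Sum.elim (fun p => Sum.inl p.1) (fun p => Sum.inr (p.1, p.2.1)) a.1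

/-- `f : E(G) → {0,1}` has even parity if the number of edges with `f(e) = 1` is even. -/
def EvenParity (G : SimpleGraph V) [DecidableRel G.Adj] (f : Sym2 V → Bool) : Prop :=
  Even ((G.edgeFinset.filter fun e => f e = true).card)

noncomputable def cutCount {V : Type*} (G : SimpleGraph V) (S : Set V) : ℕ :=
  {p : V × V | p.1 ∈ S ∧ p.2 ∉ S ∧ G.Adj p.1 p.2}.ncard

noncomputable def expSet {V : Type*} (G : SimpleGraph V) (S : Set V) : ℝ :=
  (cutCount G S : ℝ) / (min S.ncard Sᶜ.ncard : ℕ)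

noncomputable def expG {V : Type*} (G : SimpleGraph V) : ℝ :=
  ⨅ S : {S : Set V // S.Nonempty ∧ S ≠ Set.univ}, expSet G S.1


set_option linter.unusedSectionVars false

namespace CFIAux

open Finset

instance instDE (G : SimpleGraph V) [DecidableRel G.Adj] : DecidableEq (CFIVert G) := by
  unfold CFIVert; infer_instance

instance instFT (G : SimpleGraph V) [DecidableRel G.Adj] : Fintype (CFIVert G) := by
  unfold CFIVert
  have : DecidablePred fun x : (V × Finset V) ⊕ (V × V × Bool) =>
      Sum.elim (fun p => p.2 ⊆ G.neighborFinset p.1 ∧ Even p.2.card)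
        (fun p => G.Adj p.1 p.2.1) x := by
    rintro (p | p) <;> · dsimp; infer_instance
  exact Subtype.fintype _

def vOf (G : SimpleGraph V) [DecidableRel G.Adj] : CFIVert G → V :=
  fun x => Sum.elim (fun p => p.1) (fun p => p.1) x.1

def midV (G : SimpleGraph V) [DecidableRel G.Adj] (v : V) (T : Finset V)
    (h : T ⊆ G.neighborFinset v ∧ Even T.card) : CFIVert G := ⟨.inl (v, T), h⟩

def edgV (G : SimpleGraph V) [DecidableRel G.Adj] (v u : V) (b : Bool)
    (h : G.Adj v u) : CFIVert G := ⟨.inr (v, u, b), h⟩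

@[simp] lemma vOf_midV (G : SimpleGraph V) [DecidableRel G.Adj] (v T h) :
    vOf G (midV G v T h) = v := rfl

@[simp] lemma vOf_edgV (G : SimpleGraph V) [DecidableRel G.Adj] (v u b h) :
    vOf G (edgV G v u b h) = v := rfl

lemma adj_mid_edg (G : SimpleGraph V) [DecidableRel G.Adj] (f : Sym2 V → Bool)
    {v u : V} {T : Finset V} (h : T ⊆ G.neighborFinset v ∧ Even T.card) (h' : G.Adj v u) :
    (CFIGraph G f).Adj (midV G v T h) (edgV G v u (decide (u ∈ T)) h') := by
  simp only [CFIGraph, SimpleGraph.fromRel_adj]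
  refine ⟨?_, Or.inl ⟨rfl, rfl⟩⟩
  intro he
  have := congrArg Subtype.val he
  simp [midV, edgV] at this

lemma adj_edg_edg (G : SimpleGraph V) [DecidableRel G.Adj] (f : Sym2 V → Bool)
    {v u : V} (c : Bool) (h : G.Adj v u) :
    (CFIGraph G f).Adj (edgV G v u c h) (edgV G u v (c ^^ f s(v,u)) h.symm) := by
  simp only [CFIGraph, SimpleGraph.fromRel_adj]
  refine ⟨?_, Or.inl ⟨rfl, rfl, rfl⟩⟩
  intro he
  have := congrArg Subtype.val he
  simp only [edgV, Sum.inr.injEq, Prod.mk.injEq] at this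
  exact h.ne this.1


lemma gadget_conn (G : SimpleGraph V) [DecidableRel G.Adj] (f : Sym2 V → Bool) {v : V}
    (hdeg : G.degree v = 3) (S : Set (CFIVert G))
    (H : ∀ x y : CFIVert G, vOf G x = v → vOf G y = v →
      (CFIGraph G f).Adj x y → (x ∈ S ↔ y ∈ S)) :
    ∀ x : CFIVert G, vOf G x = v →
      (x ∈ S ↔ midV G v ∅ ⟨Finset.empty_subset _, by simp⟩ ∈ S) := by
  have hN : (G.neighborFinset v).card = 3 := by
    rw [SimpleGraph.card_neighborFinset_eq_degree]; exact hdeg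
  set x0 : CFIVert G := midV G v ∅ ⟨Finset.empty_subset _, by simp⟩ with hx0
  -- edge vertices with bit false are adjacent to x0
  have step_e0 : ∀ (u : V) (hu : G.Adj v u), (edgV G v u false hu ∈ S ↔ x0 ∈ S) := by
    intro u hu
    have hadj := adj_mid_edg G f (v := v) (u := u) (T := ∅)
      ⟨Finset.empty_subset _, by simp⟩ hu
    have hd : decide (u ∈ (∅ : Finset V)) = false := by simp
    rw [hd] at hadj
    exact (H x0 _ (by rfl) (by rfl) hadj).symm
  have step_mid2 : ∀ (T : Finset V) (hT : T ⊆ G.neighborFinset v ∧ Even T.card),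
      T.card = 2 → (midV G v T hT ∈ S ↔ x0 ∈ S) := by
    intro T hT hc
    have hsd : (G.neighborFinset v \ T).Nonempty := by
      rw [← Finset.card_pos, Finset.card_sdiff_of_subset hT.1, hN, hc]; norm_num
    obtain ⟨z, hz⟩ := hsd
    rw [Finset.mem_sdiff] at hz
    have hzadj : G.Adj v z := (SimpleGraph.mem_neighborFinset G v z).1 hz.1
    have hadj := adj_mid_edg G f hT hzadj
    have hd : decide (z ∈ T) = false := by simp [hz.2]
    rw [hd] at hadj
    exact (H _ _ (by rfl) (by rfl) hadj).trans (step_e0 z hzadj)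
  rintro ⟨xx, hp⟩ hxv
  rcases xx with ⟨w, T⟩ | ⟨w, u, b⟩
  · have hw : w = v := hxv
    subst hw
    have hp' : T ⊆ G.neighborFinset w ∧ Even T.card := hp
    have hle : T.card ≤ 3 := hN ▸ Finset.card_le_card hp'.1
    obtain ⟨k, hk⟩ := hp'.2
    have : T.card = 0 ∨ T.card = 2 := by omega
    rcases this with h0 | h2
    · have : T = ∅ := Finset.card_eq_zero.1 h0
      subst this
      have : (⟨Sum.inl (w, (∅ : Finset V)), hp⟩ : CFIVert G) = x0 := Subtype.ext rfl
      rw [this]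
    · exact step_mid2 T hp' h2
  · have hw : w = v := hxv
    subst hw
    have hp' : G.Adj w u := hp
    show edgV G w u b hp' ∈ S ↔ x0 ∈ S
    cases b
    · exact step_e0 u hp'
    · have hu : u ∈ G.neighborFinset w := (SimpleGraph.mem_neighborFinset G w u).2 hp'
      have herase : (G.neighborFinset w).erase u |>.Nonempty := by
        rw [← Finset.card_pos, Finset.card_erase_of_mem hu, hN]; norm_num
      obtain ⟨z, hz⟩ := herase
      have hzu : z ≠ u := Finset.ne_of_mem_erase hz
      have hzN : z ∈ G.neighborFinset w := Finset.mem_of_mem_erase hz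
      have hT : ({u, z} : Finset V) ⊆ G.neighborFinset w ∧ Even ({u, z} : Finset V).card := by
        constructor
        · intro a ha
          rcases Finset.mem_insert.1 ha with rfl | ha
          · exact hu
          · rwa [Finset.mem_singleton.1 ha]
        · rw [Finset.card_pair (Ne.symm hzu)]; decide
      have hadj := adj_mid_edg G f hT hp'
      have hd : decide (u ∈ ({u, z} : Finset V)) = true := by simp
      rw [hd] at hadj
      exact ((H _ _ (by rfl) (by rfl) hadj).symm).trans
        (step_mid2 _ hT (Finset.card_pair (Ne.symm hzu)))


open scoped Classical

variable (G : SimpleGraph V) [DecidableRel G.Adj]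

noncomputable def CCut (f : Sym2 V → Bool) (S : Set (CFIVert G)) :
    Finset (CFIVert G × CFIVert G) :=
  Finset.univ.filter (fun p => p.1 ∈ S ∧ p.2 ∉ S ∧ (CFIGraph G f).Adj p.1 p.2)

noncomputable def aV (S : Set (CFIVert G)) (v : V) : ℕ :=
  (Finset.univ.filter fun x : CFIVert G => vOf G x = v ∧ x ∈ S).card

noncomputable def bV (S : Set (CFIVert G)) (v : V) : ℕ :=
  (Finset.univ.filter fun x : CFIVert G => vOf G x = v ∧ x ∉ S).card

noncomputable def gV (v : V) : ℕ :=
  (Finset.univ.filter fun x : CFIVert G => vOf G x = v).card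

noncomputable def CintF (f : Sym2 V → Bool) (S : Set (CFIVert G)) :
    Finset (CFIVert G × CFIVert G) :=
  (CCut G f S).filter (fun p => vOf G p.1 = vOf G p.2)

noncomputable def cutvV (f : Sym2 V → Bool) (S : Set (CFIVert G)) (v : V) : ℕ :=
  ((CintF G f S).filter fun p => vOf G p.1 = v).card

lemma hab (S : Set (CFIVert G)) (v : V) : aV G S v + bV G S v = gV G v := by
  have e1 : (Finset.univ.filter fun x : CFIVert G => vOf G x = v ∧ x ∈ S)
      = (Finset.univ.filter fun x : CFIVert G => vOf G x = v).filter (fun x => x ∈ S) := by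
    rw [Finset.filter_filter]
  have e2 : (Finset.univ.filter fun x : CFIVert G => vOf G x = v ∧ x ∉ S)
      = (Finset.univ.filter fun x : CFIVert G => vOf G x = v).filter (fun x => x ∉ S) := by
    rw [Finset.filter_filter]
  rw [aV, bV, gV, e1, e2]
  exact Finset.card_filter_add_card_filter_not _

lemma gV_le (hreg : ∀ v, G.degree v = 3) (v : V) : gV G v ≤ 10 := by
  have hN : (G.neighborFinset v).card = 3 := by
    rw [G.card_neighborFinset_eq_degree]; exact hreg v
  set N := G.neighborFinset v with hNdef
  set M : Finset (Finset V) := N.powerset.filter (fun T => Even T.card) with hM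
  have hMcard : M.card ≤ 4 := by
    have hsub : M ⊆ Finset.powersetCard 0 N ∪ Finset.powersetCard 2 N := by
      intro T hT
      rw [hM, Finset.mem_filter, Finset.mem_powerset] at hT
      have hle : T.card ≤ 3 := hN ▸ Finset.card_le_card hT.1
      obtain ⟨k, hk⟩ := hT.2
      have hcases : T.card = 0 ∨ T.card = 2 := by omega
      rw [Finset.mem_union, Finset.mem_powersetCard, Finset.mem_powersetCard]
      rcases hcases with h | h
      · exact Or.inl ⟨hT.1, h⟩
      · exact Or.inr ⟨hT.1, h⟩
    calc M.card ≤ (Finset.powersetCard 0 N ∪ Finset.powersetCard 2 N).card :=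
          Finset.card_le_card hsub
      _ ≤ (Finset.powersetCard 0 N).card + (Finset.powersetCard 2 N).card :=
          Finset.card_union_le _ _
      _ = Nat.choose 3 0 + Nat.choose 3 2 := by
          rw [Finset.card_powersetCard, Finset.card_powersetCard, hN]
      _ = 4 := rfl
  have hinj : (Finset.univ.filter fun x : CFIVert G => vOf G x = v).card
      ≤ (M.disjSum (N ×ˢ (Finset.univ : Finset Bool))).card := by
    apply Finset.card_le_card_of_injOn
      (fun x : CFIVert G =>
        Sum.elim (fun p : V × Finset V => Sum.inl p.2)
          (fun p : V × V × Bool => Sum.inr (p.2.1, p.2.2)) x.1)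
    · rintro ⟨⟨w, T⟩ | ⟨w, u, c⟩, hp⟩ hx
      · simp only [Finset.coe_filter, Set.mem_setOf_eq, Finset.mem_univ, true_and] at hx
        have hw : w = v := hx
        subst hw
        simp only [Sum.elim_inl]
        apply Finset.inl_mem_disjSum.2
        rw [hM, Finset.mem_filter, Finset.mem_powerset]
        exact ⟨hp.1, hp.2⟩
      · simp only [Finset.coe_filter, Set.mem_setOf_eq, Finset.mem_univ, true_and] at hx
        have hw : w = v := hx
        subst hw
        simp only [Sum.elim_inr]
        apply Finset.inr_mem_disjSum.2
        rw [Finset.mem_product]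
        exact ⟨(G.mem_neighborFinset w u).2 hp, Finset.mem_univ _⟩
    · rintro ⟨⟨w, T⟩ | ⟨w, u, c⟩, hpx⟩ hx ⟨⟨w', T'⟩ | ⟨w', u', c'⟩, hpy⟩ hy hEq <;>
        simp only [Finset.coe_filter, Set.mem_setOf_eq, Finset.mem_univ, true_and] at hx hy <;>
        simp only [Sum.elim_inl, Sum.elim_inr, Sum.inl.injEq, Sum.inr.injEq,
          Prod.mk.injEq] at hEq
      · apply Subtype.ext
        have hw : w = v := hx
        have hw' : w' = v := hy
        simp only [Sum.inl.injEq, Prod.mk.injEq]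
        exact ⟨hw.trans hw'.symm, hEq⟩
      · exact absurd hEq (by simp)
      · exact absurd hEq (by simp)
      · apply Subtype.ext
        have hw : w = v := hx
        have hw' : w' = v := hy
        simp only [Sum.inr.injEq, Prod.mk.injEq]
        exact ⟨hw.trans hw'.symm, hEq.1, hEq.2⟩
  rw [gV]
  refine hinj.trans ?_
  rw [Finset.card_disjSum, Finset.card_product, hN]
  simp only [Finset.card_univ, Fintype.card_bool]
  omega


lemma cutCount_eq_filter {α : Type*} [Fintype α] (H : SimpleGraph α) (S : Set α) :
    cutCount H S
      = (Finset.univ.filter fun p : α × α => p.1 ∈ S ∧ p.2 ∉ S ∧ H.Adj p.1 p.2).card := by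
  rw [cutCount, Set.ncard_eq_toFinset_card']
  congr 1
  ext p
  simp [Set.mem_toFinset]

lemma ncard_eq_filter {α : Type*} [Fintype α] (S : Set α) :
    S.ncard = (Finset.univ.filter fun x => x ∈ S).card := by
  rw [Set.ncard_eq_toFinset_card']
  congr 1
  ext p
  simp [Set.mem_toFinset]

lemma sum_aV (S : Set (CFIVert G)) :
    ∑ v, aV G S v = (Finset.univ.filter fun x : CFIVert G => x ∈ S).card := by
  rw [Finset.card_eq_sum_card_fiberwise
    (f := fun x : CFIVert G => vOf G x) (t := Finset.univ) (fun x _ => Finset.mem_univ _)]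
  apply Finset.sum_congr rfl
  intro v _
  rw [aV, Finset.filter_filter]
  congr 1
  ext x
  simp only [Finset.mem_filter, Finset.mem_univ, true_and]
  tauto

lemma sum_bV (S : Set (CFIVert G)) :
    ∑ v, bV G S v = (Finset.univ.filter fun x : CFIVert G => x ∉ S).card := by
  rw [Finset.card_eq_sum_card_fiberwise
    (f := fun x : CFIVert G => vOf G x) (t := Finset.univ) (fun x _ => Finset.mem_univ _)]
  apply Finset.sum_congr rfl
  intro v _
  rw [bV, Finset.filter_filter]
  congr 1
  ext x
  simp only [Finset.mem_filter, Finset.mem_univ, true_and]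
  tauto

lemma sum_cutvV (f : Sym2 V → Bool) (S : Set (CFIVert G)) :
    ∑ v, cutvV G f S v = (CintF G f S).card := by
  rw [Finset.card_eq_sum_card_fiberwise
    (f := fun p : CFIVert G × CFIVert G => vOf G p.1) (t := Finset.univ)
    (fun x _ => Finset.mem_univ _)]
  apply Finset.sum_congr rfl
  intro v _
  rw [cutvV]

lemma dichotomy (f : Sym2 V → Bool) (S : Set (CFIVert G)) (v : V)
    (hdeg : G.degree v = 3) (h0 : cutvV G f S v = 0) :
    aV G S v = 0 ∨ bV G S v = 0 := by
  have hfe : ∀ p ∈ CintF G f S, ¬ vOf G p.1 = v := by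
    rw [cutvV, Finset.card_eq_zero] at h0
    intro p hp
    exact (Finset.filter_eq_empty_iff.1 h0) hp
  have H : ∀ x y : CFIVert G, vOf G x = v → vOf G y = v →
      (CFIGraph G f).Adj x y → (x ∈ S ↔ y ∈ S) := by
    intro x y hx hy hadj
    by_contra hne
    have hcase : (x ∈ S ∧ y ∉ S) ∨ (y ∈ S ∧ x ∉ S) := by tauto
    rcases hcase with ⟨h1, h2⟩ | ⟨h1, h2⟩
    · refine hfe (x, y) ?_ hx
      rw [CintF, Finset.mem_filter, CCut, Finset.mem_filter]
      exact ⟨⟨Finset.mem_univ _, h1, h2, hadj⟩, hx.trans hy.symm⟩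
    · refine hfe (y, x) ?_ hy
      rw [CintF, Finset.mem_filter, CCut, Finset.mem_filter]
      exact ⟨⟨Finset.mem_univ _, h1, h2, hadj.symm⟩, hy.trans hx.symm⟩
  have hconn := gadget_conn G f hdeg S H
  by_cases hx0 : midV G v ∅ ⟨Finset.empty_subset _, by simp⟩ ∈ S
  · right
    rw [bV, Finset.card_eq_zero, Finset.filter_eq_empty_iff]
    rintro x - ⟨hxv, hxS⟩
    exact hxS ((hconn x hxv).2 hx0)
  · left
    rw [aV, Finset.card_eq_zero, Finset.filter_eq_empty_iff]
    rintro x - ⟨hxv, hxS⟩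
    exact hx0 ((hconn x hxv).1 hxS)


lemma expSet_nonneg {α : Type*} (H : SimpleGraph α) (S : Set α) : 0 ≤ expSet H S := by
  rw [expSet]; positivity

lemma expG_nonneg {α : Type*} (H : SimpleGraph α) : 0 ≤ expG H :=
  Real.iInf_nonneg fun S => expSet_nonneg H S.1

lemma expG_le {α : Type*} (H : SimpleGraph α) (S : Set α) (h1 : S.Nonempty)
    (h2 : S ≠ Set.univ) : expG H ≤ expSet H S :=
  ciInf_le ⟨0, by rintro x ⟨i, rfl⟩; exact expSet_nonneg H i.1⟩
    (⟨S, h1, h2⟩ : {S : Set α // S.Nonempty ∧ S ≠ Set.univ})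

lemma expG_le_three (hreg : ∀ v, G.degree v = 3) (hV : Nonempty V) : expG G ≤ 3 := by
  obtain ⟨v0⟩ := hV
  have hN : (G.neighborFinset v0).Nonempty := by
    rw [← Finset.card_pos, G.card_neighborFinset_eq_degree, hreg]; norm_num
  obtain ⟨u0, hu0⟩ := hN
  have hadj : G.Adj v0 u0 := (G.mem_neighborFinset v0 u0).1 hu0
  have hne : u0 ≠ v0 := fun h => G.irrefl (h ▸ hadj)
  have h1 : ({v0} : Set V).Nonempty := ⟨v0, rfl⟩
  have h2 : ({v0} : Set V) ≠ Set.univ := by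
    intro h
    have : u0 ∈ ({v0} : Set V) := by rw [h]; trivial
    exact hne this
  refine (expG_le G {v0} h1 h2).trans ?_
  rw [expSet]
  have hc1 : ({v0} : Set V).ncard = 1 := Set.ncard_singleton v0
  have hc2 : 1 ≤ ({v0} : Set V)ᶜ.ncard := by
    refine (Set.ncard_pos (Set.toFinite _)).2 ⟨u0, ?_⟩
    simpa using hne
  have hmin : min ({v0} : Set V).ncard ({v0} : Set V)ᶜ.ncard = 1 := by
    rw [hc1]; exact min_eq_left hc2
  have hcut : cutCount G {v0} ≤ 3 := by
    rw [cutCount_eq_filter]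
    refine le_trans (Finset.card_le_card
      (t := ({v0} : Finset V) ×ˢ G.neighborFinset v0) fun p hp => ?_) ?_
    · simp only [Finset.mem_filter, Set.mem_singleton_iff] at hp
      rw [Finset.mem_product, Finset.mem_singleton]
      exact ⟨hp.2.1, (G.mem_neighborFinset _ _).2 (hp.2.1 ▸ hp.2.2.2)⟩
    · rw [Finset.card_product, Finset.card_singleton, G.card_neighborFinset_eq_degree,
        hreg]
  rw [hmin]
  push_cast
  rw [div_one]
  exact_mod_cast hcut

lemma main_aux (hreg : ∀ v, G.degree v = 3) (f : Sym2 V → Bool) (hV : Nonempty V)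
    (S : Set (CFIVert G)) (hS1 : S.Nonempty) (hS2 : S ≠ Set.univ) :
    expG G / 54 ≤ expSet (CFIGraph G f) S := by
  classical
  set c := (CCut G f S).card with hc
  set cint := (CintF G f S).card with hcintdef
  set m := min S.ncard Sᶜ.ncard with hm
  have hm1 : 1 ≤ m := by
    rw [hm]
    refine le_min ((Set.ncard_pos (Set.toFinite _)).2 hS1)
      ((Set.ncard_pos (Set.toFinite _)).2 (Set.nonempty_compl.2 hS2))
  have hcint_le : cint ≤ c := Finset.card_le_card (Finset.filter_subset _ _)
  set S' : Finset V := Finset.univ.filter (fun v => gV G v < 2 * aV G S v) with hS'def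
  set S'c : Finset V := Finset.univ.filter (fun v => ¬ gV G v < 2 * aV G S v) with hS'cdef
  -- pointwise mass bounds
  have hminor1 : ∀ v, ¬ gV G v < 2 * aV G S v → aV G S v ≤ 5 * cutvV G f S v := by
    intro v hv
    by_cases h0 : cutvV G f S v = 0
    · rcases dichotomy G f S v (hreg v) h0 with h | h
      · omega
      · have := hab G S v
        omega
    · have := gV_le G hreg v
      have := hab G S v
      omega
  have hminor2 : ∀ v, gV G v < 2 * aV G S v → bV G S v ≤ 5 * cutvV G f S v := by
    intro v hv
    by_cases h0 : cutvV G f S v = 0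
    · rcases dichotomy G f S v (hreg v) h0 with h | h
      · omega
      · omega
    · have := gV_le G hreg v
      have := hab G S v
      omega
  -- global mass bounds
  have hmass1 : S.ncard ≤ 10 * S'.card + 5 * cint := by
    have e1 : S.ncard = ∑ v, aV G S v := by
      rw [ncard_eq_filter, sum_aV]
    rw [e1, ← Finset.sum_filter_add_sum_filter_not Finset.univ
      (fun v => gV G v < 2 * aV G S v) (fun v => aV G S v), ← hS'def, ← hS'cdef]
    have b1 : ∑ v ∈ S', aV G S v ≤ 10 * S'.card := by
      rw [hS'def]
      calc ∑ v ∈ Finset.univ.filter (fun v => gV G v < 2 * aV G S v), aV G S v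
          ≤ ∑ _v ∈ Finset.univ.filter (fun v => gV G v < 2 * aV G S v), 10 := by
            apply Finset.sum_le_sum
            intro v _
            have := gV_le G hreg v
            have := hab G S v
            omega
        _ = _ := by rw [Finset.sum_const, smul_eq_mul]; ring
    have b2 : ∑ v ∈ S'c, aV G S v ≤ 5 * cint := by
      calc ∑ v ∈ S'c, aV G S v ≤ ∑ v ∈ S'c, 5 * cutvV G f S v := by
            apply Finset.sum_le_sum
            intro v hv
            rw [hS'cdef, Finset.mem_filter] at hv
            exact hminor1 v hv.2
        _ ≤ ∑ v, 5 * cutvV G f S v :=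
            Finset.sum_le_sum_of_subset (Finset.filter_subset _ _)
        _ = 5 * cint := by rw [← Finset.mul_sum, sum_cutvV]
    omega
  have hmass2 : Sᶜ.ncard ≤ 10 * S'c.card + 5 * cint := by
    have e1 : Sᶜ.ncard = ∑ v, bV G S v := by
      rw [ncard_eq_filter, sum_bV]
      congr 1
      ext x
      simp
    rw [e1, ← Finset.sum_filter_add_sum_filter_not Finset.univ
      (fun v => gV G v < 2 * aV G S v) (fun v => bV G S v), ← hS'def, ← hS'cdef]
    have b1 : ∑ v ∈ S', bV G S v ≤ 5 * cint := by
      calc ∑ v ∈ S', bV G S v ≤ ∑ v ∈ S', 5 * cutvV G f S v := by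
            apply Finset.sum_le_sum
            intro v hv
            rw [hS'def, Finset.mem_filter] at hv
            exact hminor2 v hv.2
        _ ≤ ∑ v, 5 * cutvV G f S v :=
            Finset.sum_le_sum_of_subset (Finset.filter_subset _ _)
        _ = 5 * cint := by rw [← Finset.mul_sum, sum_cutvV]
    have b2 : ∑ v ∈ S'c, bV G S v ≤ 10 * S'c.card := by
      calc ∑ v ∈ S'c, bV G S v ≤ ∑ _v ∈ S'c, 10 := by
            apply Finset.sum_le_sum
            intro v _
            have := gV_le G hreg v
            have := hab G S v
            omega
        _ = _ := by rw [Finset.sum_const, smul_eq_mul]; ring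
    omega
  -- the cut in G determined by the majority set S'
  set cutG : Finset (V × V) := Finset.univ.filter
    (fun p : V × V => p.1 ∈ (S' : Set V) ∧ p.2 ∉ (S' : Set V) ∧ G.Adj p.1 p.2) with hcutGdef
  set splitS : Finset V := Finset.univ.filter (fun v => 1 ≤ cutvV G f S v) with hsplitdef
  have h9a : splitS.card ≤ cint := by
    rw [hcintdef, ← sum_cutvV]
    calc splitS.card = ∑ _v ∈ splitS, 1 := by rw [Finset.sum_const, smul_eq_mul, mul_one]
      _ ≤ ∑ v ∈ splitS, cutvV G f S v := Finset.sum_le_sum (fun v hv => by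
          rw [hsplitdef, Finset.mem_filter] at hv; exact hv.2)
      _ ≤ ∑ v, cutvV G f S v := Finset.sum_le_sum_of_subset (Finset.filter_subset _ _)
  set k : V × V → V := fun p => if 1 ≤ cutvV G f S p.1 then p.1 else p.2 with hk
  set cutGs := cutG.filter (fun p => 1 ≤ cutvV G f S p.1 ∨ 1 ≤ cutvV G f S p.2) with hGs
  set cutGp := cutG.filter (fun p => ¬(1 ≤ cutvV G f S p.1 ∨ 1 ≤ cutvV G f S p.2)) with hGp
  have hGsum : cutGs.card + cutGp.card = cutG.card :=
    Finset.card_filter_add_card_filter_not _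
  have h9b : cutGs.card ≤ 3 * splitS.card := by
    have hmap : ∀ p ∈ cutGs, k p ∈ splitS := by
      intro p hp
      rw [hGs, Finset.mem_filter] at hp
      rw [hsplitdef, Finset.mem_filter]
      refine ⟨Finset.mem_univ _, ?_⟩
      rw [hk]
      dsimp only
      by_cases h1 : 1 ≤ cutvV G f S p.1
      · rw [if_pos h1]; exact h1
      · rw [if_neg h1]
        rcases hp.2 with h | h
        · exact absurd h h1
        · exact h
    rw [Finset.card_eq_sum_card_fiberwise hmap]
    have hfib : ∀ w ∈ splitS, (cutGs.filter (fun p => k p = w)).card ≤ 3 := by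
      intro w _
      have hcard3 : (G.neighborFinset w).card = 3 := by
        rw [G.card_neighborFinset_eq_degree]; exact hreg w
      rw [← hcard3]
      apply Finset.card_le_card_of_injOn (fun p => if p.1 = w then p.2 else p.1)
      · intro p hp
        rw [Finset.mem_coe, Finset.mem_filter, hGs, Finset.mem_filter, hcutGdef, Finset.mem_filter] at hp
        obtain ⟨⟨⟨-, hp1, hp2, hadj⟩, -⟩, hkw⟩ := hp
        simp only [Finset.mem_coe]
        by_cases h1 : p.1 = w
        · rw [if_pos h1]
          exact (G.mem_neighborFinset _ _).2 (h1 ▸ hadj)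
        · rw [if_neg h1]
          have hp2w : p.2 = w := by
            rw [hk] at hkw
            dsimp only at hkw
            by_cases hcv : 1 ≤ cutvV G f S p.1
            · rw [if_pos hcv] at hkw; exact absurd hkw h1
            · rw [if_neg hcv] at hkw; exact hkw
          exact (G.mem_neighborFinset _ _).2 ((hp2w ▸ hadj) : G.Adj p.1 w).symm
      · intro p hp q hq hpq
        dsimp only at hpq
        rw [Finset.mem_coe, Finset.mem_filter, hGs, Finset.mem_filter, hcutGdef,
          Finset.mem_filter] at hp hq
        obtain ⟨⟨⟨-, hp1, hp2, hadjp⟩, -⟩, hkp⟩ := hp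
        obtain ⟨⟨⟨-, hq1, hq2, hadjq⟩, -⟩, hkq⟩ := hq
        have hkey : ∀ r : V × V, k r = w → r.1 ≠ w → r.2 = w := by
          intro r hr hne
          rw [hk] at hr
          dsimp only at hr
          by_cases hcv : 1 ≤ cutvV G f S r.1
          · rw [if_pos hcv] at hr; exact absurd hr hne
          · rw [if_neg hcv] at hr; exact hr
        by_cases hpw : p.1 = w <;> by_cases hqw : q.1 = w
        · rw [if_pos hpw, if_pos hqw] at hpq
          exact Prod.ext (hpw.trans hqw.symm) hpq
        · exact absurd (hpw ▸ hp1) ((hkey q hkq hqw) ▸ hq2)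
        · exact absurd (hqw ▸ hq1) ((hkey p hkp hpw) ▸ hp2)
        · rw [if_neg hpw, if_neg hqw] at hpq
          exact Prod.ext hpq ((hkey p hkp hpw).trans (hkey q hkq hqw).symm)
    calc ∑ w ∈ splitS, (cutGs.filter (fun p => k p = w)).card
        ≤ ∑ _w ∈ splitS, 3 := Finset.sum_le_sum hfib
      _ = 3 * splitS.card := by rw [Finset.sum_const, smul_eq_mul]; ring
  set Ccr := (CCut G f S).filter (fun p => ¬ vOf G p.1 = vOf G p.2) with hCcr
  have hccr : cint + Ccr.card = c := by
    rw [hcintdef, hCcr, hc, CintF]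
    exact Finset.card_filter_add_card_filter_not _
  have h9c : cutGp.card ≤ Ccr.card := by
    have hx0 : Nonempty (CFIVert G × CFIVert G) := by
      obtain ⟨v0⟩ := hV
      exact ⟨(midV G v0 ∅ ⟨Finset.empty_subset _, by simp⟩,
              midV G v0 ∅ ⟨Finset.empty_subset _, by simp⟩)⟩
    apply Finset.card_le_card_of_injOn (fun p : V × V =>
      if h : G.Adj p.1 p.2 then
        (edgV G p.1 p.2 false h, edgV G p.2 p.1 (false ^^ f s(p.1, p.2)) h.symm)
      else Classical.arbitrary _)
    · intro p hp
      rw [Finset.mem_coe, hGp, Finset.mem_filter, hcutGdef, Finset.mem_filter] at hp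
      obtain ⟨⟨-, hp1, hp2, hadj⟩, hns⟩ := hp
      push_neg at hns
      have hcv1 : cutvV G f S p.1 = 0 := by omega
      have hcv2 : cutvV G f S p.2 = 0 := by omega
      have hb1 : bV G S p.1 = 0 := by
        rcases dichotomy G f S p.1 (hreg p.1) hcv1 with h | h
        · exfalso
          rw [Finset.mem_coe, hS'def, Finset.mem_filter] at hp1
          have := hp1.2
          omega
        · exact h
      have ha2 : aV G S p.2 = 0 := by
        rcases dichotomy G f S p.2 (hreg p.2) hcv2 with h | h
        · exact h
        · have hnp : ¬ (gV G p.2 < 2 * aV G S p.2) := by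
            intro hcon
            exact hp2 (by
              rw [Finset.mem_coe, hS'def, Finset.mem_filter]
              exact ⟨Finset.mem_univ _, hcon⟩)
          have := hab G S p.2
          omega
      rw [bV, Finset.card_eq_zero, Finset.filter_eq_empty_iff] at hb1
      rw [aV, Finset.card_eq_zero, Finset.filter_eq_empty_iff] at ha2
      simp only [Finset.mem_coe]
      rw [dif_pos hadj, hCcr, Finset.mem_filter, CCut, Finset.mem_filter]
      refine ⟨⟨Finset.mem_univ _, ?_, ?_, adj_edg_edg G f false hadj⟩, hadj.ne⟩
      · by_contra hxs
        exact hb1 (Finset.mem_univ _) ⟨by rfl, hxs⟩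
      · intro hxs
        exact ha2 (Finset.mem_univ _) ⟨by rfl, hxs⟩
    · intro p hp q hq hpq
      dsimp only at hpq
      rw [Finset.mem_coe, hGp, Finset.mem_filter, hcutGdef, Finset.mem_filter] at hp hq
      obtain ⟨⟨-, -, -, hadjp⟩, -⟩ := hp
      obtain ⟨⟨-, -, -, hadjq⟩, -⟩ := hq
      rw [dif_pos hadjp, dif_pos hadjq] at hpq
      have h1 := congrArg (fun z : CFIVert G × CFIVert G => z.1.1) hpq
      simp only [edgV, Sum.inr.injEq, Prod.mk.injEq] at h1
      exact Prod.ext h1.1 h1.2.1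
  have hcutG_le : cutG.card ≤ 3 * c := by
    calc cutG.card = cutGs.card + cutGp.card := hGsum.symm
      _ ≤ 3 * splitS.card + Ccr.card := Nat.add_le_add h9b h9c
      _ ≤ 3 * cint + Ccr.card := Nat.add_le_add_right (Nat.mul_le_mul_left 3 h9a) _
      _ ≤ 3 * (cint + Ccr.card) := by omega
      _ = 3 * c := by rw [hccr]
  -- convert the CFI expansion quotient
  have hccS : cutCount (CFIGraph G f) S = c := by
    rw [cutCount_eq_filter, hc, CCut]
  rw [expSet, hccS, ← hm]
  rcases le_or_gt m (18 * c) with hcase | hcase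
  · have h3 := expG_le_three G hreg hV
    have hmpos : (0:ℝ) < (m : ℕ) := by exact_mod_cast hm1
    calc expG G / 54 ≤ 3 / 54 := (div_le_div_iff_of_pos_right (by norm_num)).2 h3
      _ ≤ (c : ℝ) / (m : ℕ) := by
        rw [div_le_div_iff₀ (by norm_num) hmpos]
        have hcm : (m : ℝ) ≤ 18 * c := by exact_mod_cast hcase
        linarith
  · have hminS : m ≤ S.ncard := by rw [hm]; exact min_le_left _ _
    have hminSc : m ≤ Sᶜ.ncard := by rw [hm]; exact min_le_right _ _
    have hS'pos : 1 ≤ S'.card := by omega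
    have hS'cpos : 1 ≤ S'c.card := by omega
    set m' := min S'.card S'c.card with hm'
    have hm'pos : 1 ≤ m' := le_min hS'pos hS'cpos
    have hmm' : m ≤ 18 * m' := by
      rcases min_cases S'.card S'c.card with ⟨h1, h2⟩ | ⟨h1, h2⟩ <;> omega
    have hS'ne : (↑S' : Set V).Nonempty := by
      obtain ⟨v, hv⟩ := Finset.card_pos.1 hS'pos
      exact ⟨v, hv⟩
    have hS'nu : (↑S' : Set V) ≠ Set.univ := by
      obtain ⟨w, hw⟩ := Finset.card_pos.1 hS'cpos
      intro hcon
      have hmem : w ∈ (↑S' : Set V) := by rw [hcon]; trivial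
      rw [hS'cdef, Finset.mem_filter] at hw
      rw [Finset.mem_coe, hS'def, Finset.mem_filter] at hmem
      exact hw.2 hmem.2
    have hle1 : expG G ≤ expSet G (↑S') := expG_le G (↑S') hS'ne hS'nu
    have hexpS' : expSet G (↑S') = (cutG.card : ℝ) / (m' : ℕ) := by
      rw [expSet]
      have e1 : cutCount G (↑S' : Set V) = cutG.card := by
        rw [cutCount_eq_filter, hcutGdef]
        congr 1
        ext p
        simp [Finset.mem_filter]
      have e2 : (↑S' : Set V).ncard = S'.card := Set.ncard_coe_finset _
      have ecompl : S'ᶜ = S'c := by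
        ext v
        simp [hS'def, hS'cdef]
      have e3 : (↑S' : Set V)ᶜ.ncard = S'c.card := by
        rw [← Finset.coe_compl, Set.ncard_coe_finset, ecompl]
      rw [e1, e2, e3, hm']
    have hnat : cutG.card * m ≤ 54 * c * m' := by
      calc cutG.card * m ≤ (3 * c) * (18 * m') := Nat.mul_le_mul hcutG_le hmm'
        _ = 54 * c * m' := by ring
    have hm'pos' : (0:ℝ) < (m' : ℕ) := by exact_mod_cast hm'pos
    have hmpos : (0:ℝ) < (m : ℕ) := by exact_mod_cast hm1
    calc expG G / 54 ≤ ((cutG.card : ℝ) / (m' : ℕ)) / 54 :=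
          (div_le_div_iff_of_pos_right (by norm_num)).2 (hle1.trans (le_of_eq hexpS'))
      _ ≤ (c : ℝ) / (m : ℕ) := by
          rw [div_div]
          have hpos2 : (0:ℝ) < ((m' : ℕ) : ℝ) * 54 := mul_pos hm'pos' (by norm_num)
          rw [div_le_div_iff₀ hpos2 hmpos]
          have hcast : (cutG.card : ℝ) * m ≤ 54 * c * m' := by exact_mod_cast hnat
          nlinarith [hcast]

end CFIAux

/-- For a 3-regular graph `G` and an even-parity twisting function `f`,
the CFI graph `X_f(G)` has edge expansion at least `Ex(G)/54`. -/
theorem cfi_expansion_even {V : Type*} [Fintype V] [DecidableEq V]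
    (G : SimpleGraph V) [DecidableRel G.Adj]
    (hreg : ∀ v, G.degree v = 3)
    (f : Sym2 V → Bool) (hpar : EvenParity G f) :
    expG G / 54 ≤ expG (CFIGraph G f) := by
  classical
  rcases isEmpty_or_nonempty V with hVe | hV
  · have hidx : IsEmpty {S : Set V // S.Nonempty ∧ S ≠ Set.univ} := by
      constructor
      rintro ⟨S, ⟨x, -⟩, -⟩
      exact hVe.false x
    have h1 : expG G = 0 := by
      rw [expG, Real.iInf_of_isEmpty]
    rw [h1, zero_div]
    exact CFIAux.expG_nonneg _
  · obtain ⟨v0⟩ := hV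
    have hN : (G.neighborFinset v0).Nonempty := by
      rw [← Finset.card_pos, G.card_neighborFinset_eq_degree, hreg]; norm_num
    obtain ⟨u0, hu0⟩ := hN
    have hadj : G.Adj v0 u0 := (G.mem_neighborFinset v0 u0).1 hu0
    set x0 : CFIVert G := CFIAux.midV G v0 ∅ ⟨Finset.empty_subset _, by simp⟩ with hx0
    set x1 : CFIVert G := CFIAux.edgV G v0 u0 false hadj with hx1
    have hne : x1 ∉ ({x0} : Set (CFIVert G)) := by
      rw [Set.mem_singleton_iff, hx1, hx0]
      intro h
      have := congrArg Subtype.val h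
      simp [CFIAux.midV, CFIAux.edgV] at this
    have hidx : Nonempty {S : Set (CFIVert G) // S.Nonempty ∧ S ≠ Set.univ} := by
      refine ⟨⟨{x0}, ⟨x0, rfl⟩, ?_⟩⟩
      intro h
      exact hne (by rw [h]; trivial)
    have hmain : expG G / 54 ≤
        ⨅ S : {S : Set (CFIVert G) // S.Nonempty ∧ S ≠ Set.univ},
          expSet (CFIGraph G f) S.1 :=
      le_ciInf (fun S => CFIAux.main_aux G hreg f ⟨v0⟩ S.1 S.2.1 S.2.2)
    exact hmain
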